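/- Suppose A belongs to the class 𝒜 and Φ satisfies condition δ2. Then for any sequence (x̄^{(l)})_{l≥1} in l_Φ^A(X), one has ‖x̄^{(l)}‖_Φ^A → 0 as l → ∞ if and only if ρ_Φ^A(x̄^{(l)}) → 0 as l → ∞. -/

import Mathlib

open Filter Topology

/-- An Orlicz function: convex, nondecreasing, continuous on `[0,∞)`,
vanishing at `0`, positive on `(0,∞)`, tending to `∞` at `∞`. -/
structure IsOrliczFn (φ : ℝ → ℝ) : Prop where
  convexOn : ConvexOn ℝ (Set.Ici (0 : ℝ)) φ
  monotoneOn : MonotoneOn φ (Set.Ici (0 : ℝ))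
  continuousOn : ContinuousOn φ (Set.Ici (0 : ℝ))
  map_zero : φ 0 = 0
  pos : ∀ t : ℝ, 0 < t → 0 < φ t
  tendsto_atTop : Filter.Tendsto φ Filter.atTop Filter.atTop

/-- A Musielak-Orlicz function: a sequence of Orlicz functions. -/
def IsMusielakOrlicz (Φ : ℕ → ℝ → ℝ) : Prop := ∀ n, IsOrliczFn (Φ n)

/-- Condition δ₂ for a Musielak-Orlicz function. -/
def MOCondDelta2 (Φ : ℕ → ℝ → ℝ) : Prop :=
  ∃ K > (0 : ℝ), ∃ δ > (0 : ℝ), ∃ c : ℕ → ℝ, (∀ n, 0 ≤ c n) ∧ Summable c ∧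
    ∀ n : ℕ, ∀ x : ℝ, 0 ≤ x → Φ n x ≤ δ → Φ n (2 * x) ≤ K * Φ n x + c n

/-- Condition (*) for a Musielak-Orlicz function. -/
def MOCondStar (Φ : ℕ → ℝ → ℝ) : Prop :=
  ∀ ε : ℝ, ε ∈ Set.Ioo (0 : ℝ) 1 → ∃ δ > (0 : ℝ), ∀ n : ℕ, ∀ u : ℝ, 0 ≤ u →
    Φ n u < 1 - ε → Φ n ((1 + δ) * u) ≤ 1

/-- The class 𝒜 of infinite matrices: every column is nonzero. -/
def MatrixClassA (a : ℕ → ℕ → ℝ) : Prop := ∀ k, ∃ n, a n k ≠ 0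

/-- A triangle matrix: nonzero diagonal, zero above the diagonal. -/
def IsTriangle (a : ℕ → ℕ → ℝ) : Prop := (∀ n, a n n ≠ 0) ∧ ∀ n k, n < k → a n k = 0

/-- The `n`-th row sum `∑_k |a_{nk}| ‖x_k‖`. -/
noncomputable def rowSum {X : Type*} [NormedAddCommGroup X]
    (a : ℕ → ℕ → ℝ) (x : ℕ → X) (n : ℕ) : ℝ :=
  ∑' k, |a n k| * ‖x k‖

/-- Membership in the generalized Musielak-Orlicz sequence space `l_Φ^A(X)`:
`x` is a bounded sequence whose row sums are finite and
`∑_n φ_n(rowSum_n / σ) < ∞` for some `σ > 0`. -/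
def MemL {X : Type*} [NormedAddCommGroup X]
    (Φ : ℕ → ℝ → ℝ) (a : ℕ → ℕ → ℝ) (x : ℕ → X) : Prop :=
  (∃ C : ℝ, ∀ k, ‖x k‖ ≤ C) ∧ (∀ n, Summable fun k => |a n k| * ‖x k‖) ∧
    ∃ σ > (0 : ℝ), Summable fun n => Φ n (rowSum a x n / σ)

/-- Membership in `h_Φ^A(X)`: as `MemL` but for every `σ > 0`. -/
def MemH {X : Type*} [NormedAddCommGroup X]
    (Φ : ℕ → ℝ → ℝ) (a : ℕ → ℕ → ℝ) (x : ℕ → X) : Prop :=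
  (∃ C : ℝ, ∀ k, ‖x k‖ ≤ C) ∧ (∀ n, Summable fun k => |a n k| * ‖x k‖) ∧
    ∀ σ > (0 : ℝ), Summable fun n => Φ n (rowSum a x n / σ)

/-- The Luxemburg-type norm `‖x‖_Φ^A`. -/
noncomputable def ANorm {X : Type*} [NormedAddCommGroup X]
    (Φ : ℕ → ℝ → ℝ) (a : ℕ → ℕ → ℝ) (x : ℕ → X) : ℝ :=
  sInf {σ : ℝ | 0 < σ ∧ (Summable fun n => Φ n (rowSum a x n / σ)) ∧
    (∑' n, Φ n (rowSum a x n / σ)) ≤ 1}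

/-- The modular `ρ_Φ^A(x) = ∑_n φ_n(∑_k |a_{nk}| ‖x_k‖)`. -/
noncomputable def rhoA {X : Type*} [NormedAddCommGroup X]
    (Φ : ℕ → ℝ → ℝ) (a : ℕ → ℕ → ℝ) (x : ℕ → X) : ℝ :=
  ∑' n, Φ n (rowSum a x n)

/-- The `m`-th section of a sequence: first `m` coordinates kept, rest zero. -/
def sect {X : Type*} [Zero X] (x : ℕ → X) (m : ℕ) : ℕ → X :=
  fun k => if k < m then x k else 0

section OrliczAux

lemma orlicz_nonneg {φ : ℝ → ℝ} (h : IsOrliczFn φ) {t : ℝ} (ht : 0 ≤ t) : 0 ≤ φ t := by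
  have := h.monotoneOn Set.self_mem_Ici (Set.mem_Ici.mpr ht) ht
  simpa [h.map_zero] using this

lemma orlicz_mono {φ : ℝ → ℝ} (h : IsOrliczFn φ) {s t : ℝ} (hs : 0 ≤ s) (hst : s ≤ t) :
    φ s ≤ φ t := h.monotoneOn (Set.mem_Ici.mpr hs) (Set.mem_Ici.mpr (hs.trans hst)) hst

lemma orlicz_scale {φ : ℝ → ℝ} (h : IsOrliczFn φ) {l u : ℝ} (hl0 : 0 ≤ l) (hl1 : l ≤ 1)
    (hu : 0 ≤ u) : φ (l * u) ≤ l * φ u := by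
  have := h.convexOn.2 (Set.mem_Ici.mpr hu) Set.self_mem_Ici hl0 (by linarith : (0:ℝ) ≤ 1 - l)
    (by ring)
  simpa [h.map_zero, smul_eq_mul] using this

lemma orlicz_small {φ : ℝ → ℝ} (h : IsOrliczFn φ) {τ : ℝ} (hτ : 0 < τ) :
    ∃ t > (0:ℝ), φ (2 * t) < τ := by
  have hc : ContinuousWithinAt φ (Set.Ici 0) 0 := h.continuousOn 0 Set.self_mem_Ici
  have htend : Tendsto φ (nhdsWithin 0 (Set.Ici 0)) (𝓝 0) := by
    have := hc.tendsto
    rwa [h.map_zero] at this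
  have hmem : φ ⁻¹' Set.Iio τ ∈ nhdsWithin (0:ℝ) (Set.Ici 0) := htend (gt_mem_nhds hτ)
  rw [mem_nhdsGE_iff_exists_Ico_subset] at hmem
  obtain ⟨u, hu, hsub⟩ := hmem
  refine ⟨u / 4, by simpa using (Set.mem_Ioi.mp hu), ?_⟩
  have : 2 * (u / 4) ∈ Set.Ico (0:ℝ) u := by
    constructor
    · have := Set.mem_Ioi.mp hu; linarith
    · have := Set.mem_Ioi.mp hu; linarith
  exact hsub this

lemma rowSum_nonneg {X : Type*} [NormedAddCommGroup X] (a : ℕ → ℕ → ℝ) (x : ℕ → X) (n : ℕ) :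
    0 ≤ rowSum a x n :=
  tsum_nonneg fun k => mul_nonneg (abs_nonneg _) (norm_nonneg _)

set_option maxHeartbeats 1000000 in
/-- Doubling lemma from the δ₂ condition: if the modular is small enough,
the modular of the doubled sequence is `< τ`. -/
lemma doubling (Φ : ℕ → ℝ → ℝ) (hΦ : IsMusielakOrlicz Φ) (hδ : MOCondDelta2 Φ)
    {τ : ℝ} (hτ : 0 < τ) :
    ∃ η > (0:ℝ), ∀ R : ℕ → ℝ, (∀ n, 0 ≤ R n) → Summable (fun n => Φ n (R n)) →
      (∑' n, Φ n (R n)) < η →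
      Summable (fun n => Φ n (2 * R n)) ∧ (∑' n, Φ n (2 * R n)) < τ := by
  obtain ⟨K, hK, δ, hδpos, c, hc0, hcs, hbd⟩ := hδ
  -- choose N controlling the tail of c
  obtain ⟨N, hN⟩ : ∃ N : ℕ, (∑' n, c (n + N)) < τ / 4 := by
    have h1 := hcs.hasSum.tendsto_sum_nat
    have h2 : ∀ᶠ M in atTop, (∑' n, c n) - τ/4 < ∑ i ∈ Finset.range M, c i :=
      h1.eventually (eventually_gt_nhds (by linarith))
    obtain ⟨M, hM⟩ := h2.exists
    refine ⟨M, ?_⟩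
    have h3 := Summable.sum_add_tsum_nat_add M hcs
    linarith
  -- choose thresholds for each small index
  have hsm : ∀ n : ℕ, ∃ t > (0:ℝ), Φ n (2 * t) < τ / (4 * (N + 1)) := fun n =>
    orlicz_small (hΦ n) (by positivity)
  choose t ht hφt using hsm
  set e : ℝ := (Finset.range (N + 1)).inf' (by simp) (fun n => Φ n (t n)) with he
  have hepos : 0 < e := by
    rw [he, Finset.lt_inf'_iff]
    exact fun n _ => (hΦ n).pos _ (ht n)
  have hτK : 0 < τ / (4 * K) := div_pos hτ (mul_pos (by norm_num) hK)
  refine ⟨min δ (min (τ / (4 * K)) e), lt_min hδpos (lt_min hτK hepos), ?_⟩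
  intro R hR hsum hlt
  have hnn : ∀ n, 0 ≤ Φ n (R n) := fun n => orlicz_nonneg (hΦ n) (hR n)
  have hterm : ∀ n, Φ n (R n) < min δ (min (τ / (4 * K)) e) := fun n =>
    lt_of_le_of_lt (Summable.le_tsum hsum n fun j _ => hnn j) hlt
  have hdbl : ∀ n, Φ n (2 * R n) ≤ K * Φ n (R n) + c n := fun n =>
    hbd n (R n) (hR n) (le_of_lt (lt_of_lt_of_le (hterm n) (min_le_left _ _)))
  have hnn2 : ∀ n, 0 ≤ Φ n (2 * R n) := fun n =>
    orlicz_nonneg (hΦ n) (by have := hR n; linarith)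
  have hsum2 : Summable (fun n => Φ n (2 * R n)) :=
    Summable.of_nonneg_of_le hnn2 hdbl ((hsum.mul_left K).add hcs)
  refine ⟨hsum2, ?_⟩
  -- split the sum at N
  have hsplit := Summable.sum_add_tsum_nat_add N hsum2
  -- head estimate
  have hhead : (∑ i ∈ Finset.range N, Φ i (2 * R i)) ≤ τ / 4 := by
    have hsmall : ∀ i ∈ Finset.range N, Φ i (2 * R i) ≤ τ / (4 * (N + 1)) := by
      intro i hi
      have hie : Φ i (R i) < Φ i (t i) := by
        have h1 : Φ i (R i) < e :=
          lt_of_lt_of_le (hterm i) (le_trans (min_le_right _ _) (min_le_right _ _))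
        have h2 : e ≤ Φ i (t i) := by
          rw [he]
          exact Finset.inf'_le _ (Finset.mem_range.mpr
            (Nat.lt_succ_of_lt (Finset.mem_range.mp hi)))
        exact lt_of_lt_of_le h1 h2
      have hRt : R i ≤ t i := by
        by_contra hcon
        push_neg at hcon
        exact absurd (orlicz_mono (hΦ i) (le_of_lt (ht i)) hcon.le) (not_le.mpr hie)
      have hRi := hR i
      exact le_of_lt (lt_of_le_of_lt
        (orlicz_mono (hΦ i) (by linarith) (by linarith)) (hφt i))
    calc (∑ i ∈ Finset.range N, Φ i (2 * R i))
        ≤ ∑ _i ∈ Finset.range N, τ / (4 * (N + 1)) := Finset.sum_le_sum hsmall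
      _ = N * (τ / (4 * (N + 1))) := by rw [Finset.sum_const, Finset.card_range]; ring
      _ ≤ τ / 4 := by
          have hNp : (0:ℝ) < 4 * ((N:ℝ) + 1) := by positivity
          have h3 : (N:ℝ) * (τ / (4 * ((N:ℝ) + 1))) = ((N:ℝ) * τ) / (4 * ((N:ℝ) + 1)) := by
            ring
          rw [h3, div_le_div_iff₀ hNp (by norm_num : (0:ℝ) < 4)]
          have h4 : (0:ℝ) ≤ (N:ℝ) := Nat.cast_nonneg N
          nlinarith
  -- tail estimate
  have hsumK : Summable (fun n => K * Φ n (R n) + c n) := (hsum.mul_left K).add hcs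
  have hsumKs : Summable (fun n => K * Φ (n + N) (R (n + N)) + c (n + N)) :=
    (summable_nat_add_iff N).mpr hsumK
  have hsum2s : Summable (fun n => Φ (n + N) (2 * R (n + N))) :=
    (summable_nat_add_iff N).mpr hsum2
  have hsumRs : Summable (fun n => Φ (n + N) (R (n + N))) :=
    (summable_nat_add_iff N).mpr hsum
  have hcss : Summable (fun n => c (n + N)) := (summable_nat_add_iff N).mpr hcs
  have htail : (∑' n, Φ (n + N) (2 * R (n + N))) ≤ K * (∑' n, Φ (n + N) (R (n + N)))
      + ∑' n, c (n + N) := by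
    calc (∑' n, Φ (n + N) (2 * R (n + N)))
        ≤ ∑' n, (K * Φ (n + N) (R (n + N)) + c (n + N)) :=
          Summable.tsum_le_tsum (fun n => hdbl (n + N)) hsum2s hsumKs
      _ = K * (∑' n, Φ (n + N) (R (n + N))) + ∑' n, c (n + N) := by
          rw [Summable.tsum_add (hsumRs.mul_left K) hcss, tsum_mul_left]
  have hRtail : (∑' n, Φ (n + N) (R (n + N))) ≤ τ / (4 * K) := by
    have h4 := Summable.sum_add_tsum_nat_add N hsum
    have hhead0 : 0 ≤ ∑ i ∈ Finset.range N, Φ i (R i) :=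
      Finset.sum_nonneg fun i _ => hnn i
    have : (∑' n, Φ (n + N) (R (n + N))) ≤ ∑' n, Φ n (R n) := by linarith
    refine le_trans this (le_of_lt (lt_of_lt_of_le hlt ?_))
    exact le_trans (min_le_right _ _) (min_le_left _ _)
  have hKτ : K * (∑' n, Φ (n + N) (R (n + N))) ≤ τ / 4 := by
    have := mul_le_mul_of_nonneg_left hRtail hK.le
    calc K * (∑' n, Φ (n + N) (R (n + N))) ≤ K * (τ / (4 * K)) := this
      _ = τ / 4 := by field_simp
  linarith

/-- Summability is preserved under doubling, given δ₂. -/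
lemma summable_double (Φ : ℕ → ℝ → ℝ) (hΦ : IsMusielakOrlicz Φ) (hδ : MOCondDelta2 Φ)
    (R : ℕ → ℝ) (hR : ∀ n, 0 ≤ R n) (hsum : Summable fun n => Φ n (R n)) :
    Summable fun n => Φ n (2 * R n) := by
  obtain ⟨K, hK, δ, hδpos, c, hc0, hcs, hbd⟩ := hδ
  have h0 := hsum.tendsto_atTop_zero
  have hev : ∀ᶠ n in atTop, Φ n (R n) < δ := h0.eventually (gt_mem_nhds hδpos)
  obtain ⟨N, hN⟩ := eventually_atTop.mp hev
  rw [← summable_nat_add_iff N]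
  refine Summable.of_nonneg_of_le (fun n => orlicz_nonneg (hΦ _) (by have := hR (n + N); linarith))
    (fun n => hbd (n + N) (R (n + N)) (hR _) (le_of_lt (hN _ (Nat.le_add_left N n)))) ?_
  exact (((summable_nat_add_iff N).mpr hsum).mul_left K).add ((summable_nat_add_iff N).mpr hcs)

/-- If the modular series converges at some scale `σ₀`, it converges at every scale. -/
lemma summable_all_scales (Φ : ℕ → ℝ → ℝ) (hΦ : IsMusielakOrlicz Φ) (hδ : MOCondDelta2 Φ)
    (R : ℕ → ℝ) (hR : ∀ n, 0 ≤ R n) {σ₀ : ℝ} (hσ₀ : 0 < σ₀)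
    (hsum : Summable fun n => Φ n (R n / σ₀)) :
    ∀ σ > (0:ℝ), Summable fun n => Φ n (R n / σ) := by
  have hj : ∀ j : ℕ, Summable fun n => Φ n (2 ^ j * (R n / σ₀)) := by
    intro j
    induction j with
    | zero => simpa using hsum
    | succ j ih =>
      have h2 := summable_double Φ hΦ hδ (fun n => 2 ^ j * (R n / σ₀))
        (fun n => mul_nonneg (by positivity) (div_nonneg (hR n) hσ₀.le)) ih
      have heq : (fun n => Φ n (2 ^ (j + 1) * (R n / σ₀)))
          = fun n => Φ n (2 * (2 ^ j * (R n / σ₀))) := by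
        funext n; congr 1; ring
      rw [heq]; exact h2
  intro σ hσ
  obtain ⟨j, hjle⟩ : ∃ j : ℕ, σ₀ / σ ≤ 2 ^ j :=
    (pow_unbounded_of_one_lt (σ₀ / σ) (by norm_num : (1:ℝ) < 2)).imp fun j h => h.le
  refine Summable.of_nonneg_of_le
    (fun n => orlicz_nonneg (hΦ n) (div_nonneg (hR n) hσ.le))
    (fun n => orlicz_mono (hΦ n) (div_nonneg (hR n) hσ.le) ?_) (hj j)
  have h1 : σ₀ ≤ 2 ^ j * σ := by
    rw [div_le_iff₀ hσ] at hjle; linarith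
  rw [div_le_iff₀ hσ]
  calc R n = (R n / σ₀) * σ₀ := by field_simp
    _ ≤ (R n / σ₀) * (2 ^ j * σ) := by
        exact mul_le_mul_of_nonneg_left h1 (div_nonneg (hR n) hσ₀.le)
    _ = 2 ^ j * (R n / σ₀) * σ := by ring

/-- Iterated doubling: a threshold ensuring the modular of `2^m • x` is at most 1. -/
lemma iter_doubling (Φ : ℕ → ℝ → ℝ) (hΦ : IsMusielakOrlicz Φ) (hδ : MOCondDelta2 Φ) (m : ℕ) :
    ∃ η > (0:ℝ), ∀ R : ℕ → ℝ, (∀ n, 0 ≤ R n) → Summable (fun n => Φ n (R n)) →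
      (∑' n, Φ n (R n)) < η →
      Summable (fun n => Φ n (2 ^ m * R n)) ∧ (∑' n, Φ n (2 ^ m * R n)) ≤ 1 := by
  induction m with
  | zero =>
    exact ⟨1, one_pos, fun R hR hs hlt => ⟨by simpa using hs, by
      have : (∑' n, Φ n (R n)) ≤ 1 := by linarith
      simpa using this⟩⟩
  | succ m ih =>
    obtain ⟨η, hη, hP⟩ := ih
    obtain ⟨η', hη', hD⟩ := doubling Φ hΦ hδ hη
    refine ⟨η', hη', fun R hR hs hlt => ?_⟩
    obtain ⟨hs2, hlt2⟩ := hD R hR hs hlt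
    have hmain := hP (fun n => 2 * R n)
      (fun n => by show (0:ℝ) ≤ 2 * R n; have := hR n; linarith) hs2 hlt2
    have heq : (fun n => Φ n (2 ^ (m + 1) * R n)) = fun n => Φ n (2 ^ m * (2 * R n)) := by
      funext n; congr 1; ring
    exact ⟨by rw [heq]; exact hmain.1, by rw [heq]; exact hmain.2⟩

/-- The admissible set for the Luxemburg norm is nonempty for members of `l_Φ^A(X)`. -/
lemma admissible_nonempty {X : Type*} [NormedAddCommGroup X]
    (Φ : ℕ → ℝ → ℝ) (hΦ : IsMusielakOrlicz Φ) (a : ℕ → ℕ → ℝ) {x : ℕ → X}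
    (hx : MemL Φ a x) :
    ∃ σ : ℝ, 0 < σ ∧ (Summable fun n => Φ n (rowSum a x n / σ)) ∧
      (∑' n, Φ n (rowSum a x n / σ)) ≤ 1 := by
  obtain ⟨-, -, σ₀, hσ₀, hsum⟩ := hx
  set S₀ := ∑' n, Φ n (rowSum a x n / σ₀) with hS₀def
  have hS₀ : 0 ≤ S₀ := tsum_nonneg fun n =>
    orlicz_nonneg (hΦ n) (div_nonneg (rowSum_nonneg a x n) hσ₀.le)
  set σ := σ₀ * (S₀ + 1) with hσdef
  have hσ : 0 < σ := by positivity
  set l : ℝ := 1 / (S₀ + 1) with hldef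
  have hl0 : 0 < l := by positivity
  have hl1 : l ≤ 1 := by rw [hldef, div_le_one (by linarith)]; linarith
  have key : ∀ n, Φ n (rowSum a x n / σ) ≤ l * Φ n (rowSum a x n / σ₀) := by
    intro n
    have h1 : rowSum a x n / σ = l * (rowSum a x n / σ₀) := by
      rw [hσdef, hldef, one_div, ← div_div, div_eq_inv_mul]
    rw [h1]
    exact orlicz_scale (hΦ n) hl0.le hl1 (div_nonneg (rowSum_nonneg a x n) hσ₀.le)
  have hsum2 : Summable fun n => Φ n (rowSum a x n / σ) :=
    Summable.of_nonneg_of_le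
      (fun n => orlicz_nonneg (hΦ n) (div_nonneg (rowSum_nonneg a x n) hσ.le))
      key (hsum.mul_left l)
  refine ⟨σ, hσ, hsum2, ?_⟩
  calc (∑' n, Φ n (rowSum a x n / σ)) ≤ ∑' n, l * Φ n (rowSum a x n / σ₀) :=
        Summable.tsum_le_tsum key hsum2 (hsum.mul_left l)
    _ = l * S₀ := by rw [tsum_mul_left]
    _ ≤ 1 := by
        rw [hldef, div_mul_eq_mul_div, div_le_one (by linarith)]; linarith

end OrliczAux

/-- for `A ∈ 𝒜` and `Φ ∈ δ₂`, for sequences in `l_Φ^A(X)`,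
norm convergence to `0` is equivalent to modular convergence to `0`. -/
theorem norm_tendsto_zero_iff_modular_tendsto_zero
    {X : Type*} [NormedAddCommGroup X] [NormedSpace ℝ X] [CompleteSpace X]
    (Φ : ℕ → ℝ → ℝ) (hΦ : IsMusielakOrlicz Φ) (hδ : MOCondDelta2 Φ)
    (a : ℕ → ℕ → ℝ) (hA : MatrixClassA a) :
    ∀ f : ℕ → ℕ → X, (∀ l, MemL Φ a (f l)) →
      (Tendsto (fun l => ANorm Φ a (f l)) atTop (𝓝 0) ↔
        Tendsto (fun l => rhoA Φ a (f l)) atTop (𝓝 0)) := by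
  intro f hf
  constructor
  · -- norm convergence implies modular convergence
    intro hnorm
    rw [Metric.tendsto_atTop] at hnorm ⊢
    intro ε hε
    set ε' : ℝ := min ε (1/2) with hε'def
    have hε'pos : 0 < ε' := lt_min hε (by norm_num)
    obtain ⟨N, hN⟩ := hnorm ε' hε'pos
    refine ⟨N, fun l hl => ?_⟩
    have hAlt : ANorm Φ a (f l) < ε' := by
      have := hN l hl
      rw [Real.dist_eq, sub_zero] at this
      exact lt_of_le_of_lt (le_abs_self _) this
    obtain ⟨σa, hσa⟩ := admissible_nonempty Φ hΦ a (hf l)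
    have hSne : {σ : ℝ | 0 < σ ∧ (Summable fun n => Φ n (rowSum a (f l) n / σ)) ∧
        (∑' n, Φ n (rowSum a (f l) n / σ)) ≤ 1}.Nonempty := ⟨σa, hσa⟩
    obtain ⟨σ, hσmem, hσlt⟩ := exists_lt_of_csInf_lt hSne hAlt
    obtain ⟨hσpos, hσsum, hσle⟩ := hσmem
    have hσ1 : σ ≤ 1 := by
      have : ε' ≤ 1/2 := min_le_right _ _
      linarith
    have hle : ∀ n, Φ n (rowSum a (f l) n) ≤ σ * Φ n (rowSum a (f l) n / σ) := by
      intro n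
      have heq : σ * (rowSum a (f l) n / σ) = rowSum a (f l) n := by field_simp
      have := orlicz_scale (hΦ n) hσpos.le hσ1
        (div_nonneg (rowSum_nonneg a (f l) n) hσpos.le)
      rwa [heq] at this
    have hsumρ : Summable fun n => Φ n (rowSum a (f l) n) :=
      Summable.of_nonneg_of_le (fun n => orlicz_nonneg (hΦ n) (rowSum_nonneg a (f l) n))
        hle (hσsum.mul_left σ)
    have hρle : rhoA Φ a (f l) ≤ σ := by
      rw [rhoA]
      calc (∑' n, Φ n (rowSum a (f l) n)) ≤ ∑' n, σ * Φ n (rowSum a (f l) n / σ) :=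
            Summable.tsum_le_tsum hle hsumρ (hσsum.mul_left σ)
        _ = σ * ∑' n, Φ n (rowSum a (f l) n / σ) := tsum_mul_left
        _ ≤ σ * 1 := mul_le_mul_of_nonneg_left hσle hσpos.le
        _ = σ := mul_one σ
    have hρnn : 0 ≤ rhoA Φ a (f l) :=
      tsum_nonneg fun n => orlicz_nonneg (hΦ n) (rowSum_nonneg a (f l) n)
    rw [Real.dist_eq, sub_zero, abs_of_nonneg hρnn]
    have : ε' ≤ ε := min_le_left _ _
    linarith
  · -- modular convergence implies norm convergence
    intro hrho
    rw [Metric.tendsto_atTop] at hrho ⊢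
    intro ε hε
    obtain ⟨m, hm⟩ : ∃ m : ℕ, ((1:ℝ)/2) ^ m < ε := exists_pow_lt_of_lt_one hε (by norm_num)
    obtain ⟨η, hη, hG⟩ := iter_doubling Φ hΦ hδ m
    obtain ⟨N, hN⟩ := hrho η hη
    refine ⟨N, fun l hl => ?_⟩
    set R : ℕ → ℝ := rowSum a (f l) with hRdef
    have hRnn : ∀ n, 0 ≤ R n := rowSum_nonneg a (f l)
    -- summability at scale 1
    obtain ⟨-, -, σ₀, hσ₀, hsum₀⟩ := hf l
    have hsum1 : Summable fun n => Φ n (R n) := by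
      have := summable_all_scales Φ hΦ hδ R hRnn hσ₀ hsum₀ 1 one_pos
      simpa using this
    have hρlt : (∑' n, Φ n (R n)) < η := by
      have := hN l hl
      rw [Real.dist_eq, sub_zero] at this
      exact lt_of_le_of_lt (le_abs_self _) this
    obtain ⟨hs2, hle1⟩ := hG R hRnn hsum1 hρlt
    -- σ = (1/2)^m is admissible
    set σ : ℝ := ((1:ℝ)/2) ^ m with hσdef
    have hσpos : 0 < σ := by positivity
    have heq : ∀ n, R n / σ = 2 ^ m * R n := by
      intro n
      rw [hσdef]
      rw [div_pow, one_pow, div_div_eq_mul_div, div_one, mul_comm]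
    have hmem : σ ∈ {σ : ℝ | 0 < σ ∧ (Summable fun n => Φ n (rowSum a (f l) n / σ)) ∧
        (∑' n, Φ n (rowSum a (f l) n / σ)) ≤ 1} := by
      refine ⟨hσpos, ?_, ?_⟩
      · have : (fun n => Φ n (rowSum a (f l) n / σ)) = fun n => Φ n (2 ^ m * R n) := by
          funext n; rw [← hRdef, heq n]
        rw [this]; exact hs2
      · have : (fun n => Φ n (rowSum a (f l) n / σ)) = fun n => Φ n (2 ^ m * R n) := by
          funext n; rw [← hRdef, heq n]
        rw [this]; exact hle1
    have hbdd : BddBelow {σ : ℝ | 0 < σ ∧ (Summable fun n => Φ n (rowSum a (f l) n / σ)) ∧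
        (∑' n, Φ n (rowSum a (f l) n / σ)) ≤ 1} := ⟨0, fun y hy => hy.1.le⟩
    have hAle : ANorm Φ a (f l) ≤ σ := csInf_le hbdd hmem
    have hAnn : 0 ≤ ANorm Φ a (f l) := Real.sInf_nonneg fun y hy => hy.1.le
    rw [Real.dist_eq, sub_zero, abs_of_nonneg hAnn]
    exact lt_of_le_of_lt hAle hm
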